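/- Let N > M ≥ 1 be coprime integers, α ∈ ℂ, and let τ : ℤ → ℂ satisfy τ_m ≠ 0 for all m. Suppose the sequence v_m := (τ_m τ_{m+N+M})/(τ_{m+M} τ_{m+N}) satisfies the (N,M) travelling-wave reduction of the lattice KdV equation, v_{m+N+M} − v_m = α(1/v_{m+N} − 1/v_{m+M}), for all m ∈ ℤ. Then there exist sequences β, β' : ℤ → ℂ with β_{m+M} = β_m and β'_{m+N} = β'_m for all m, such that τ satisfies both bilinear equations τ_{m+2N+M} τ_m = β_m τ_{m+N+M} τ_{m+N} − α τ_{m+2N} τ_{m+M} and τ_{m+2M+N} τ_m = β'_m τ_{m+N+M} τ_{m+M} + α τ_{m+2M} τ_{m+N} for all m ∈ ℤ. -/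

import Mathlib

/-- If `v_m = (τ_m τ_{m+N+M})/(τ_{m+M} τ_{m+N})` satisfies the `(N,M)`
travelling-wave reduction of the lattice KdV equation, then there exist sequences `β`
(periodic with period `M`) and `β'` (periodic with period `N`) such that `τ` satisfies
both bilinear equations
`τ_{m+2N+M} τ_m = β_m τ_{m+N+M} τ_{m+N} − α τ_{m+2N} τ_{m+M}` and
`τ_{m+2M+N} τ_m = β'_m τ_{m+N+M} τ_{m+M} + α τ_{m+2M} τ_{m+N}`. -/
theorem kdvReduction_implies_bilinear
    (N M : ℕ) (hM : 1 ≤ M) (hMN : M < N) (hcop : Nat.Coprime N M) (α : ℂ)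
    (τ : ℤ → ℂ) (hτ : ∀ m : ℤ, τ m ≠ 0)
    (v : ℤ → ℂ)
    (hv : ∀ m : ℤ, v m = τ m * τ (m + N + M) / (τ (m + M) * τ (m + N)))
    (hkdv : ∀ m : ℤ, v (m + N + M) - v m = α * (1 / v (m + N) - 1 / v (m + M))) :
    ∃ β β' : ℤ → ℂ,
      (∀ m : ℤ, β (m + M) = β m) ∧ (∀ m : ℤ, β' (m + N) = β' m) ∧
      (∀ m : ℤ, τ (m + 2 * N + M) * τ m =
          β m * (τ (m + N + M) * τ (m + N)) - α * (τ (m + 2 * N) * τ (m + M))) ∧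
      (∀ m : ℤ, τ (m + 2 * M + N) * τ m =
          β' m * (τ (m + N + M) * τ (m + M)) + α * (τ (m + 2 * M) * τ (m + N))) := by
  have key : ∀ m : ℤ,
      τ (m + 2 * N + 2 * M) * τ (m + M) * τ (m + N) -
        τ (m + 2 * M + N) * τ (m + 2 * N + M) * τ m =
      α * (τ (m + 2 * N) * τ (m + M) * τ (m + 2 * M + N) -
        τ (m + N) * τ (m + 2 * N + M) * τ (m + 2 * M)) := by
    intro m
    have h := hkdv m
    rw [hv, hv, hv, hv] at h
    simp only [show (m + N + M + N + M : ℤ) = m + 2 * N + 2 * M from by ring,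
      show (m + N + M + M : ℤ) = m + 2 * M + N from by ring,
      show (m + N + M + N : ℤ) = m + 2 * N + M from by ring,
      show (m + N + N + M : ℤ) = m + 2 * N + M from by ring,
      show (m + N + N : ℤ) = m + 2 * N from by ring,
      show (m + M + M : ℤ) = m + 2 * M from by ring,
      show (m + M + N : ℤ) = m + N + M from by ring,
      show (m + M + N + M : ℤ) = m + 2 * M + N from by ring,
      show (m + 2 * N + M + M : ℤ) = m + 2 * N + 2 * M from by ring] at h
    field_simp [hτ] at h
    apply mul_left_cancel₀ (b := _) (c := _)
      (mul_ne_zero (mul_ne_zero (mul_ne_zero (mul_ne_zero (hτ (m + N + M)) (hτ (m + M)))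
        (hτ (m + N))) (hτ (m + 2 * M + N))) (hτ (m + 2 * N + M)))
    linear_combination (τ (m + N + M) * τ (m + M) * τ (m + N) * τ (m + 2 * M + N) * τ (m + 2 * N + M)) * h
  refine ⟨fun m => (τ (m + 2 * N + M) * τ m + α * (τ (m + 2 * N) * τ (m + M))) /
      (τ (m + N + M) * τ (m + N)),
    fun m => (τ (m + 2 * M + N) * τ m - α * (τ (m + 2 * M) * τ (m + N))) /
      (τ (m + N + M) * τ (m + M)), ?_, ?_, ?_, ?_⟩
  · intro m
    beta_reduce
    simp only [show (m + M + 2 * N + M : ℤ) = m + 2 * N + 2 * M from by ring,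
      show (m + M + 2 * N : ℤ) = m + 2 * N + M from by ring,
      show (m + M + M : ℤ) = m + 2 * M from by ring,
      show (m + M + N + M : ℤ) = m + 2 * M + N from by ring,
      show (m + M + N : ℤ) = m + N + M from by ring,
      show (m + 2 * N + M + M : ℤ) = m + 2 * N + 2 * M from by ring,
      show (m + N + M + M : ℤ) = m + 2 * M + N from by ring]
    rw [div_eq_div_iff (mul_ne_zero (hτ _) (hτ _)) (mul_ne_zero (hτ _) (hτ _))]
    linear_combination τ (m + N + M) * key m
  · intro m
    beta_reduce
    simp only [show (m + N + 2 * M + N : ℤ) = m + 2 * N + 2 * M from by ring,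
      show (m + N + 2 * M : ℤ) = m + 2 * M + N from by ring,
      show (m + N + N : ℤ) = m + 2 * N from by ring,
      show (m + N + N + M : ℤ) = m + 2 * N + M from by ring,
      show (m + N + M + M : ℤ) = m + 2 * M + N from by ring,
      show (m + N + M + N : ℤ) = m + 2 * N + M from by ring,
      show (m + 2 * M + N + N : ℤ) = m + 2 * N + 2 * M from by ring]
    rw [div_eq_div_iff (mul_ne_zero (hτ _) (hτ _)) (mul_ne_zero (hτ _) (hτ _))]
    linear_combination τ (m + N + M) * key m
  · intro m
    beta_reduce
    rw [div_mul_cancel₀ _ (mul_ne_zero (hτ _) (hτ _))]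
    ring
  · intro m
    beta_reduce
    rw [div_mul_cancel₀ _ (mul_ne_zero (hτ _) (hτ _))]
    ring
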